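/- Fix an integer d ≥ 1, an index x ∈ Fin d, and density matrices ρ, σ (positive semidefinite d×d complex matrices of trace 1). Then ∫_{U(d)} Tr(U |x⟩⟨x| Uᴴ ρ) · Tr(U |x⟩⟨x| Uᴴ σ) dU = (1 + Tr(ρσ)) / (d(d+1)), where the integral is with respect to the Haar probability measure on U(d), |x⟩⟨x| is the matrix unit at (x,x), and Uᴴ is the conjugate transpose. -/

import Mathlib

open MeasureTheory Matrix ComplexConjugate
open scoped ComplexOrder

/-- The Hermitian inner product `⟨u, v⟩ = ∑ i, conj (u i) * v i` on `ℂ^d`. -/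
noncomputable def cInner {d : ℕ} (u v : Fin d → ℂ) : ℂ :=
  ∑ i, (starRingEnd ℂ) (u i) * v i

/-- `μ` is the Haar probability measure on the compact group `U(d)` of `d × d`
complex unitary matrices, viewed as a Borel measure on the space of all `d × d`
complex matrices: it is a probability measure, it is supported on the unitary
matrices, and it is invariant under left translation by every unitary matrix.
(On the compact metrizable group `U(d)` these properties characterize the Haar
probability measure uniquely.) -/
def IsHaarUnitary {d : ℕ} (μ : Measure (Fin d → Fin d → ℂ)) : Prop :=
  IsProbabilityMeasure μ ∧
    (∀ᵐ U ∂μ, Matrix.of U ∈ Matrix.unitaryGroup (Fin d) ℂ) ∧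
    ∀ V ∈ Matrix.unitaryGroup (Fin d) ℂ,
      μ.map (fun U => Matrix.of.symm (V * Matrix.of U)) = μ

/-- The Haar pure-state measure `μ_d` on `ℂ^d`: the pushforward of the Haar
probability measure on `U(d)` under the map sending a unitary to its first
column. -/
noncomputable def pureStateMeasure {d : ℕ} (hd : 0 < d)
    (μ : Measure (Fin d → Fin d → ℂ)) : Measure (Fin d → ℂ) :=
  μ.map fun U i => U i ⟨0, hd⟩

/-- The Born-rule probability `|⟨U e_x, ψ⟩|²` of outcome `x` when measuring the
pure state `ψ` in the orthonormal basis given by the columns of `U`. -/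
noncomputable def bornP {d : ℕ} (U : Fin d → Fin d → ℂ) (x : Fin d)
    (ψ : Fin d → ℂ) : ℝ :=
  ‖∑ i, (starRingEnd ℂ) (U i x) * ψ i‖ ^ 2

namespace HaarBornAux

variable {d : ℕ}

noncomputable def haarMono (x i j k l : Fin d) (U : Fin d → Fin d → ℂ) : ℂ :=
  U i x * conj (U j x) * (U k x * conj (U l x))

noncomputable def haarM (μ : Measure (Fin d → Fin d → ℂ)) (x i j k l : Fin d) : ℂ :=
  ∫ U, haarMono x i j k l U ∂μ

lemma col_cont (x i : Fin d) : Continuous fun U : Fin d → Fin d → ℂ => U i x :=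
  (continuous_apply x).comp (continuous_apply i)

lemma haarMono_cont (x i j k l : Fin d) : Continuous (haarMono x i j k l) := by
  unfold haarMono
  exact ((col_cont x i).mul (continuous_star.comp (col_cont x j))).mul
    ((col_cont x k).mul (continuous_star.comp (col_cont x l)))

lemma col_norm (x : Fin d) {U : Fin d → Fin d → ℂ}
    (hU : Matrix.of U ∈ Matrix.unitaryGroup (Fin d) ℂ) :
    ∑ i, (‖U i x‖ : ℝ) ^ 2 = 1 := by
  have h1 : (star (Matrix.of U) * Matrix.of U) = 1 :=
    (Matrix.mem_unitaryGroup_iff'.mp hU)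
  have h2 := congrArg (fun M => M x x) h1
  simp only [Matrix.mul_apply, Matrix.one_apply_eq] at h2
  have h3 : ∀ i, (star (Matrix.of U)) x i * (Matrix.of U) i x = ((‖U i x‖ ^ 2 : ℝ) : ℂ) := by
    intro i
    rw [Matrix.star_apply, Complex.star_def, Complex.conj_mul']
    push_cast
    rfl
  rw [Finset.sum_congr rfl (fun i _ => h3 i)] at h2
  have := congrArg Complex.re h2
  rw [Complex.re_sum] at this
  simp only [Complex.ofReal_re] at this
  exact this

lemma entry_bound (x : Fin d) {U : Fin d → Fin d → ℂ}
    (hU : Matrix.of U ∈ Matrix.unitaryGroup (Fin d) ℂ) (i : Fin d) :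
    ‖U i x‖ ≤ 1 := by
  have h := col_norm x hU
  have h2 : (‖U i x‖ : ℝ) ^ 2 ≤ 1 := by
    rw [← h]
    exact Finset.single_le_sum (f := fun j => (‖U j x‖ : ℝ) ^ 2)
      (fun j _ => sq_nonneg _) (Finset.mem_univ i)
  nlinarith [norm_nonneg (U i x)]

lemma integrable_haarMono {μ : Measure (Fin d → Fin d → ℂ)} (hμ : IsHaarUnitary μ)
    (x i j k l : Fin d) : Integrable (haarMono x i j k l) μ := by
  obtain ⟨hprob, hsupp, -⟩ := hμ
  refine (integrable_const (1 : ℝ)).mono'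
    (haarMono_cont x i j k l).aestronglyMeasurable ?_
  filter_upwards [hsupp] with U hU
  have hb := entry_bound x hU
  have : ‖haarMono x i j k l U‖
      = ‖U i x‖ * ‖U j x‖ * (‖U k x‖ * ‖U l x‖) := by
    simp [haarMono, norm_mul]
  rw [this]
  have h1 : ‖U i x‖ * ‖U j x‖ ≤ 1 :=
    mul_le_one₀ (hb i) (norm_nonneg _) (hb j)
  have h2 : ‖U k x‖ * ‖U l x‖ ≤ 1 :=
    mul_le_one₀ (hb k) (norm_nonneg _) (hb l)
  exact mul_le_one₀ h1 (mul_nonneg (norm_nonneg _) (norm_nonneg _)) h2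

lemma integrable2 {μ : Measure (Fin d → Fin d → ℂ)} (hμ : IsHaarUnitary μ)
    (x i j : Fin d) : Integrable (fun U => U i x * conj (U j x)) μ := by
  obtain ⟨hprob, hsupp, -⟩ := hμ
  refine (integrable_const (1 : ℝ)).mono'
    (((col_cont x i).mul (continuous_star.comp (col_cont x j)))).aestronglyMeasurable ?_
  filter_upwards [hsupp] with U hU
  have hb := entry_bound x hU
  have : ‖U i x * conj (U j x)‖ = ‖U i x‖ * ‖U j x‖ := by simp [norm_mul]
  rw [this]
  exact mul_le_one₀ (hb i) (norm_nonneg _) (hb j)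

lemma aux_inv {μ : Measure (Fin d → Fin d → ℂ)} (hμ : IsHaarUnitary μ)
    (f : (Fin d → Fin d → ℂ) → ℂ) (hf : Continuous f)
    (V : Matrix (Fin d) (Fin d) ℂ) (hV : V ∈ Matrix.unitaryGroup (Fin d) ℂ) :
    ∫ U, f U ∂μ = ∫ U, f (Matrix.of.symm (V * Matrix.of U)) ∂μ := by
  have hg : Continuous fun U : Fin d → Fin d → ℂ => Matrix.of.symm (V * Matrix.of U) := by
    have : Continuous fun U : Matrix (Fin d) (Fin d) ℂ => V * U :=
      continuous_const.matrix_mul continuous_id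
    exact this
  conv_lhs => rw [← hμ.2.2 V hV]
  rw [integral_map hg.measurable.aemeasurable hf.aestronglyMeasurable]


noncomputable def phaseC (p t : Fin d) : ℂ := if t = p then Complex.I else 1

lemma phaseV_mem (p : Fin d) :
    Matrix.diagonal (phaseC p) ∈ Matrix.unitaryGroup (Fin d) ℂ := by
  rw [Matrix.mem_unitaryGroup_iff']
  rw [Matrix.star_eq_conjTranspose, Matrix.diagonal_conjTranspose]
  rw [Matrix.diagonal_mul_diagonal]
  have : (fun t => (star (phaseC p) : Fin d → ℂ) t * phaseC p t) = fun _ => 1 := by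
    funext t
    simp only [Pi.star_apply, phaseC]
    by_cases h : t = p <;> simp [h, Complex.star_def, Complex.conj_I]
  rw [this, Matrix.diagonal_one]

lemma haarM_phase {μ : Measure (Fin d → Fin d → ℂ)} (hμ : IsHaarUnitary μ)
    (x : Fin d) (p i j k l : Fin d) :
    haarM μ x i j k l
      = phaseC p i * conj (phaseC p j) * (phaseC p k * conj (phaseC p l))
        * haarM μ x i j k l := by
  have hptw : ∀ U : Fin d → Fin d → ℂ,
      haarMono x i j k l (Matrix.of.symm (Matrix.diagonal (phaseC p) * Matrix.of U))
        = phaseC p i * conj (phaseC p j) * (phaseC p k * conj (phaseC p l))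
          * haarMono x i j k l U := by
    intro U
    have happ : ∀ t : Fin d,
        (Matrix.of.symm (Matrix.diagonal (phaseC p) * Matrix.of U)) t x
          = phaseC p t * U t x := by
      intro t
      show (Matrix.diagonal (phaseC p) * Matrix.of U) t x = _
      rw [Matrix.diagonal_mul]
      rfl
    simp only [haarMono, happ, _root_.map_mul]
    ring
  calc haarM μ x i j k l
      = ∫ U, haarMono x i j k l (Matrix.of.symm (Matrix.diagonal (phaseC p) * Matrix.of U)) ∂μ :=
        aux_inv hμ (haarMono x i j k l) (haarMono_cont x i j k l)
          (Matrix.diagonal (phaseC p)) (phaseV_mem p)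
    _ = ∫ U, phaseC p i * conj (phaseC p j) * (phaseC p k * conj (phaseC p l))
          * haarMono x i j k l U ∂μ :=
        integral_congr_ae (Filter.Eventually.of_forall hptw)
    _ = phaseC p i * conj (phaseC p j) * (phaseC p k * conj (phaseC p l))
          * haarM μ x i j k l := integral_const_mul _ _

lemma haarM_cancel {μ : Measure (Fin d → Fin d → ℂ)} {x i j k l : Fin d}
    (f : ℂ) (hf : f ≠ 1)
    (h : haarM μ x i j k l = f * haarM μ x i j k l) :
    haarM μ x i j k l = 0 := by
  have h0 : (1 - f) * haarM μ x i j k l = 0 := by linear_combination h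
  rcases mul_eq_zero.mp h0 with h' | h'
  · exact absurd (by linear_combination -h' : f = 1) hf
  · exact h'

lemma haarM_zero {μ : Measure (Fin d → Fin d → ℂ)} (hμ : IsHaarUnitary μ)
    (x : Fin d) {i j k l : Fin d} (h1 : ¬(i = j ∧ k = l)) (h2 : ¬(i = l ∧ k = j)) :
    haarM μ x i j k l = 0 := by
  have hIne : (Complex.I : ℂ) ≠ 1 := by simp [Complex.ext_iff]
  have hnIne : (-Complex.I : ℂ) ≠ 1 := by simp [Complex.ext_iff]
  have hn1ne : (-1 : ℂ) ≠ 1 := by norm_num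
  by_cases hij : i = j
  · have hkl : ¬ k = l := fun h => h1 ⟨hij, h⟩
    by_cases hki : k = i
    · -- pattern essentially (i,i,i,l) with l ≠ i ; use p := l
      have hil : ¬ i = l := fun h => hkl (hki.trans h)
      have hjl : ¬ j = l := fun h => hil (hij.trans h)
      have h := haarM_phase hμ x l i j k l
      simp [phaseC, hkl, hil, hjl, Complex.conj_I] at h
      exact haarM_cancel (-Complex.I) hnIne (by linear_combination h)
    · -- p := k
      have hik : ¬ i = k := fun h => hki h.symm
      have hjk : ¬ j = k := fun h => hik (hij.trans h)
      have hlk : ¬ l = k := fun h => hkl h.symm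
      have h := haarM_phase hμ x k i j k l
      simp [phaseC, hik, hjk, hlk, Complex.conj_I] at h
      exact haarM_cancel Complex.I hIne (by linear_combination h)
  · by_cases hil : i = l
    · -- p := j ; j ≠ i, k ≠ j
      have hkj : ¬ k = j := fun h => h2 ⟨hil, h⟩
      have hlj : ¬ l = j := fun h => hij (hil.trans h)
      have h := haarM_phase hμ x j i j k l
      simp [phaseC, hij, hkj, hlj, Complex.conj_I] at h
      exact haarM_cancel (-Complex.I) hnIne (by linear_combination h)
    · -- p := i
      have hji : ¬ j = i := fun h => hij h.symm
      have hli : ¬ l = i := fun h => hil h.symm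
      have h := haarM_phase hμ x i i j k l
      by_cases hki : k = i
      · simp [phaseC, hji, hli, hki, Complex.conj_I] at h
        rw [hki]
        exact haarM_cancel (-1) hn1ne (by linear_combination h)
      · simp [phaseC, hji, hli, hki, Complex.conj_I] at h
        exact haarM_cancel Complex.I hIne (by linear_combination h)

noncomputable def rr : ℂ := ((Real.sqrt 2)⁻¹ : ℝ)

lemma rr_conj : conj rr = rr := Complex.conj_ofReal _

lemma rr_sq : rr * rr = 1 / 2 := by
  unfold rr
  rw [← Complex.ofReal_mul, ← mul_inv, Real.mul_self_sqrt (by norm_num : (0:ℝ) ≤ 2)]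
  norm_num

noncomputable def hadV (p q : Fin d) : Matrix (Fin d) (Fin d) ℂ :=
  Matrix.of fun t s =>
    if t = p then (if s = p then rr else if s = q then rr else 0)
    else if t = q then (if s = p then rr else if s = q then -rr else 0)
    else if s = t then 1 else 0

lemma sum_split {p q : Fin d} (hpq : p ≠ q) (f : Fin d → ℂ) :
    ∑ t, f t = f p + f q + ∑ t ∈ (Finset.univ.erase p).erase q, f t := by
  have hq : q ∈ Finset.univ.erase p :=
    Finset.mem_erase.mpr ⟨hpq.symm, Finset.mem_univ q⟩
  rw [← Finset.add_sum_erase _ f (Finset.mem_univ p), ← Finset.add_sum_erase _ f hq,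
    add_assoc]

lemma hadV_mem {p q : Fin d} (hpq : p ≠ q) :
    hadV p q ∈ Matrix.unitaryGroup (Fin d) ℂ := by
  rw [Matrix.mem_unitaryGroup_iff']
  ext a b
  rw [Matrix.mul_apply]
  have hterm : ∀ t, (star (hadV p q)) a t * hadV p q t b
      = conj (hadV p q t a) * hadV p q t b := by
    intro t
    rw [Matrix.star_apply, Complex.star_def]
  rw [Finset.sum_congr rfl fun t _ => hterm t, sum_split hpq]
  have hrest : ∑ t ∈ (Finset.univ.erase p).erase q, conj (hadV p q t a) * hadV p q t b
      = if a ∈ (Finset.univ.erase p).erase q then (if a = b then (1:ℂ) else 0) else 0 := by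
    rw [← Finset.sum_ite_eq _ a (fun t => if t = b then (1:ℂ) else 0)]
    refine Finset.sum_congr rfl fun t ht => ?_
    obtain ⟨htq, htp, -⟩ : t ≠ q ∧ t ≠ p ∧ True := by
      have h := Finset.mem_erase.mp ht
      exact ⟨h.1, (Finset.mem_erase.mp h.2).1, trivial⟩
    simp only [hadV, Matrix.of_apply, if_neg htp, if_neg htq]
    by_cases hta : a = t
    · subst hta
      simp only [if_pos rfl, _root_.map_one, one_mul]
      by_cases htb : b = a
      · subst htb; simp
      · have hab : ¬ a = b := fun h => htb h.symm
        simp [htb, hab]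
    · simp [hta]
  rw [hrest]
  by_cases hap : a = p <;> by_cases haq : a = q <;> by_cases hbp : b = p <;>
    by_cases hbq : b = q <;>
    simp_all [hadV, Matrix.one_apply, Finset.mem_erase, rr_conj]
  all_goals try linear_combination (2:ℂ) * rr_sq
  all_goals try ring
  all_goals try rw [if_neg (fun h : p = b => hbp h.symm)]
  all_goals try rw [if_neg (fun h : q = b => hbq h.symm)]
  all_goals exact fun h => by subst h; simp_all

lemma hadV_row {p q : Fin d} (hpq : p ≠ q) (U : Fin d → Fin d → ℂ) (x : Fin d) :
    (Matrix.of.symm (hadV p q * Matrix.of U)) p x = rr * (U p x + U q x) := by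
  show (hadV p q * Matrix.of U) p x = _
  rw [Matrix.mul_apply, sum_split hpq]
  have h1 : hadV p q p p = rr := by simp [hadV]
  have h2 : hadV p q p q = rr := by simp [hadV, hpq]
  have h3 : ∑ t ∈ (Finset.univ.erase p).erase q, hadV p q p t * Matrix.of U t x = 0 := by
    refine Finset.sum_eq_zero fun t ht => ?_
    have h := Finset.mem_erase.mp ht
    have htq : t ≠ q := h.1
    have htp : t ≠ p := (Finset.mem_erase.mp h.2).1
    simp [hadV, htp, htq]
  rw [h1, h2, h3]
  simp only [Matrix.of_apply]
  ring

lemma haarM_swapjl (μ : Measure (Fin d → Fin d → ℂ)) (x i j k l : Fin d) :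
    haarM μ x i j k l = haarM μ x i l k j := by
  unfold haarM
  exact integral_congr_ae (Filter.Eventually.of_forall fun U => by unfold haarMono; ring)

lemma haarM_swappair (μ : Measure (Fin d → Fin d → ℂ)) (x i j k l : Fin d) :
    haarM μ x i j k l = haarM μ x k l i j := by
  unfold haarM
  exact integral_congr_ae (Filter.Eventually.of_forall fun U => by unfold haarMono; ring)

lemma haarM_had {μ : Measure (Fin d → Fin d → ℂ)} (hμ : IsHaarUnitary μ)
    (x : Fin d) {p q : Fin d} (hpq : p ≠ q) :
    4 * haarM μ x p p p p
      = haarM μ x p p p p + haarM μ x q q q q + 4 * haarM μ x p p q q := by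
  have hpt : ∀ U : Fin d → Fin d → ℂ,
      haarMono x p p p p (Matrix.of.symm (hadV p q * Matrix.of U))
        = (1/4 : ℂ) * ∑ i ∈ ({p, q} : Finset (Fin d)), ∑ j ∈ ({p, q} : Finset (Fin d)),
            ∑ k ∈ ({p, q} : Finset (Fin d)), ∑ l ∈ ({p, q} : Finset (Fin d)),
              haarMono x i j k l U := by
    intro U
    rw [haarMono, hadV_row hpq U x]
    simp only [Finset.sum_pair hpq, haarMono, _root_.map_mul, map_add, rr_conj]
    linear_combination (rr * rr + 1/2) *
      ((U p x + U q x) * ((starRingEnd ℂ) (U p x) + (starRingEnd ℂ) (U q x)))^2 * rr_sq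
  have hexp : haarM μ x p p p p
      = (1/4 : ℂ) * ∑ i ∈ ({p, q} : Finset (Fin d)), ∑ j ∈ ({p, q} : Finset (Fin d)),
          ∑ k ∈ ({p, q} : Finset (Fin d)), ∑ l ∈ ({p, q} : Finset (Fin d)),
            haarM μ x i j k l := by
    calc haarM μ x p p p p
        = ∫ U, haarMono x p p p p (Matrix.of.symm (hadV p q * Matrix.of U)) ∂μ :=
          aux_inv hμ _ (haarMono_cont x p p p p) _ (hadV_mem hpq)
      _ = ∫ U, (1/4 : ℂ) * ∑ i ∈ ({p, q} : Finset (Fin d)), ∑ j ∈ ({p, q} : Finset (Fin d)),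
            ∑ k ∈ ({p, q} : Finset (Fin d)), ∑ l ∈ ({p, q} : Finset (Fin d)),
              haarMono x i j k l U ∂μ :=
          integral_congr_ae (Filter.Eventually.of_forall hpt)
      _ = (1/4 : ℂ) * ∫ U, ∑ i ∈ ({p, q} : Finset (Fin d)), ∑ j ∈ ({p, q} : Finset (Fin d)),
            ∑ k ∈ ({p, q} : Finset (Fin d)), ∑ l ∈ ({p, q} : Finset (Fin d)),
              haarMono x i j k l U ∂μ := integral_const_mul _ _
      _ = (1/4 : ℂ) * ∑ i ∈ ({p, q} : Finset (Fin d)), ∑ j ∈ ({p, q} : Finset (Fin d)),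
            ∑ k ∈ ({p, q} : Finset (Fin d)), ∑ l ∈ ({p, q} : Finset (Fin d)),
              haarM μ x i j k l := by
          rw [integral_finset_sum _ (fun i _ => integrable_finset_sum _ (fun j _ =>
            integrable_finset_sum _ (fun k _ => integrable_finset_sum _ (fun l _ =>
              integrable_haarMono hμ x i j k l))))]
          congr 1
          refine Finset.sum_congr rfl fun i _ => ?_
          rw [integral_finset_sum _ (fun j _ => integrable_finset_sum _ (fun k _ =>
            integrable_finset_sum _ (fun l _ => integrable_haarMono hμ x i j k l)))]
          refine Finset.sum_congr rfl fun j _ => ?_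
          rw [integral_finset_sum _ (fun k _ => integrable_finset_sum _ (fun l _ =>
            integrable_haarMono hμ x i j k l))]
          refine Finset.sum_congr rfl fun k _ => ?_
          rw [integral_finset_sum _ (fun l _ => integrable_haarMono hμ x i j k l)]
          rfl
  have hz : ∀ i j k l : Fin d, ¬(i = j ∧ k = l) → ¬(i = l ∧ k = j) →
      haarM μ x i j k l = 0 := fun i j k l => haarM_zero hμ x
  have hqp : q ≠ p := hpq.symm
  simp only [Finset.sum_pair hpq] at hexp
  rw [hz p p p q (by simp [hpq, hqp]) (by simp [hpq, hqp]),
      hz p p q p (by simp [hpq, hqp]) (by simp [hpq, hqp]),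
      hz p q p p (by simp [hpq, hqp]) (by simp [hpq, hqp]),
      hz q p p p (by simp [hpq, hqp]) (by simp [hpq, hqp]),
      hz p q q q (by simp [hpq, hqp]) (by simp [hpq, hqp]),
      hz q p q q (by simp [hpq, hqp]) (by simp [hpq, hqp]),
      hz q q p q (by simp [hpq, hqp]) (by simp [hpq, hqp]),
      hz q q q p (by simp [hpq, hqp]) (by simp [hpq, hqp]),
      hz p q p q (by simp [hpq, hqp]) (by simp [hpq, hqp]),
      hz q p q p (by simp [hpq, hqp]) (by simp [hpq, hqp]),
      (haarM_swapjl μ x p q q p).trans rfl,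
      (haarM_swappair μ x q q p p).trans rfl,
      (haarM_swapjl μ x q p p q).trans (haarM_swappair μ x q q p p)] at hexp
  linear_combination 4 * hexp

noncomputable def haarN (μ : Measure (Fin d → Fin d → ℂ)) (x i j : Fin d) : ℂ :=
  ∫ U, U i x * conj (U j x) ∂μ

lemma haarN_phase {μ : Measure (Fin d → Fin d → ℂ)} (hμ : IsHaarUnitary μ)
    (x : Fin d) (p i j : Fin d) :
    haarN μ x i j = phaseC p i * conj (phaseC p j) * haarN μ x i j := by
  have hcont : Continuous fun U : Fin d → Fin d → ℂ => U i x * conj (U j x) :=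
    (col_cont x i).mul (continuous_star.comp (col_cont x j))
  have hptw : ∀ U : Fin d → Fin d → ℂ,
      (fun U : Fin d → Fin d → ℂ => U i x * conj (U j x))
          (Matrix.of.symm (Matrix.diagonal (phaseC p) * Matrix.of U))
        = phaseC p i * conj (phaseC p j) * (U i x * conj (U j x)) := by
    intro U
    have happ : ∀ t : Fin d,
        (Matrix.of.symm (Matrix.diagonal (phaseC p) * Matrix.of U)) t x
          = phaseC p t * U t x := by
      intro t
      show (Matrix.diagonal (phaseC p) * Matrix.of U) t x = _
      rw [Matrix.diagonal_mul]
      rfl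
    simp only [happ, _root_.map_mul]
    ring
  calc haarN μ x i j
      = ∫ U, (fun U : Fin d → Fin d → ℂ => U i x * conj (U j x))
          (Matrix.of.symm (Matrix.diagonal (phaseC p) * Matrix.of U)) ∂μ :=
        aux_inv hμ _ hcont _ (phaseV_mem p)
    _ = ∫ U, phaseC p i * conj (phaseC p j) * (U i x * conj (U j x)) ∂μ :=
        integral_congr_ae (Filter.Eventually.of_forall hptw)
    _ = phaseC p i * conj (phaseC p j) * haarN μ x i j := integral_const_mul _ _

lemma haarN_zero {μ : Measure (Fin d → Fin d → ℂ)} (hμ : IsHaarUnitary μ)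
    (x : Fin d) {i j : Fin d} (hij : i ≠ j) : haarN μ x i j = 0 := by
  have h := haarN_phase hμ x i i j
  have hji : ¬ j = i := fun h' => hij h'.symm
  simp [phaseC, hji, Complex.conj_I] at h
  have h0 : (1 - Complex.I) * haarN μ x i j = 0 := by linear_combination h
  rcases mul_eq_zero.mp h0 with h' | h'
  · exact absurd (by linear_combination -h' : (Complex.I : ℂ) = 1) (by simp [Complex.ext_iff])
  · exact h'

lemma haarN_diag_eq {μ : Measure (Fin d → Fin d → ℂ)} (hμ : IsHaarUnitary μ)
    (x : Fin d) {p q : Fin d} (hpq : p ≠ q) : haarN μ x p p = haarN μ x q q := by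
  have hcont : Continuous fun U : Fin d → Fin d → ℂ => U p x * conj (U p x) :=
    (col_cont x p).mul (continuous_star.comp (col_cont x p))
  have hpt : ∀ U : Fin d → Fin d → ℂ,
      (fun U : Fin d → Fin d → ℂ => U p x * conj (U p x))
          (Matrix.of.symm (hadV p q * Matrix.of U))
        = (1/2 : ℂ) * ∑ i ∈ ({p, q} : Finset (Fin d)), ∑ j ∈ ({p, q} : Finset (Fin d)),
            U i x * conj (U j x) := by
    intro U
    simp only [hadV_row hpq U x, Finset.sum_pair hpq, _root_.map_mul, map_add, rr_conj]
    linear_combination ((U p x + U q x) * ((starRingEnd ℂ) (U p x)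
      + (starRingEnd ℂ) (U q x))) * rr_sq
  have hexp : haarN μ x p p
      = (1/2 : ℂ) * ∑ i ∈ ({p, q} : Finset (Fin d)), ∑ j ∈ ({p, q} : Finset (Fin d)),
          haarN μ x i j := by
    calc haarN μ x p p
        = ∫ U, (fun U : Fin d → Fin d → ℂ => U p x * conj (U p x))
            (Matrix.of.symm (hadV p q * Matrix.of U)) ∂μ :=
          aux_inv hμ _ hcont _ (hadV_mem hpq)
      _ = ∫ U, (1/2 : ℂ) * ∑ i ∈ ({p, q} : Finset (Fin d)), ∑ j ∈ ({p, q} : Finset (Fin d)),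
            U i x * conj (U j x) ∂μ :=
          integral_congr_ae (Filter.Eventually.of_forall hpt)
      _ = (1/2 : ℂ) * ∫ U, ∑ i ∈ ({p, q} : Finset (Fin d)), ∑ j ∈ ({p, q} : Finset (Fin d)),
            U i x * conj (U j x) ∂μ := integral_const_mul _ _
      _ = (1/2 : ℂ) * ∑ i ∈ ({p, q} : Finset (Fin d)), ∑ j ∈ ({p, q} : Finset (Fin d)),
            haarN μ x i j := by
          rw [integral_finset_sum _ (fun i _ => integrable_finset_sum _ (fun j _ =>
            integrable2 hμ x i j))]
          refine congrArg _ (Finset.sum_congr rfl fun i _ => ?_)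
          rw [integral_finset_sum _ (fun j _ => integrable2 hμ x i j)]
          rfl
  have hqp : q ≠ p := hpq.symm
  simp only [Finset.sum_pair hpq] at hexp
  rw [haarN_zero hμ x hpq, haarN_zero hμ x hqp] at hexp
  linear_combination 2 * hexp

lemma haarN_val {μ : Measure (Fin d → Fin d → ℂ)} (hμ : IsHaarUnitary μ)
    (hd : 0 < d) (x i : Fin d) : haarN μ x i i = 1 / d := by
  have hsum : ∑ j, haarN μ x j j = 1 := by
    have h1 : ∑ j, haarN μ x j j = ∫ U, ∑ j, U j x * conj (U j x) ∂μ :=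
      (integral_finset_sum _ (fun j _ => integrable2 hμ x j j)).symm
    have h2 : ∀ᵐ U ∂μ, ∑ j, U j x * conj (U j x) = 1 := by
      filter_upwards [hμ.2.1] with U hU
      have h3 : ∀ j : Fin d, U j x * conj (U j x) = ((‖U j x‖ ^ 2 : ℝ) : ℂ) := by
        intro j
        rw [mul_comm, Complex.conj_mul']
        push_cast
        rfl
      rw [Finset.sum_congr rfl fun j _ => h3 j, ← Complex.ofReal_sum, col_norm x hU,
        Complex.ofReal_one]
    rw [h1, integral_congr_ae h2]
    haveI := hμ.1
    simp
  have hall : ∀ j, haarN μ x j j = haarN μ x i i := by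
    intro j
    by_cases h : j = i
    · rw [h]
    · exact haarN_diag_eq hμ x h
  rw [Finset.sum_congr rfl (fun j _ => hall j), Finset.sum_const, Finset.card_univ,
    Fintype.card_fin, nsmul_eq_mul] at hsum
  have hdc : (d : ℂ) ≠ 0 := Nat.cast_ne_zero.mpr hd.ne'
  field_simp
  linear_combination hsum

lemma col_sum_one (x : Fin d) {U : Fin d → Fin d → ℂ}
    (hU : Matrix.of U ∈ Matrix.unitaryGroup (Fin d) ℂ) :
    ∑ k, U k x * conj (U k x) = 1 := by
  have h3 : ∀ j : Fin d, U j x * conj (U j x) = ((‖U j x‖ ^ 2 : ℝ) : ℂ) := by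
    intro j
    rw [mul_comm, Complex.conj_mul']
    push_cast
    rfl
  rw [Finset.sum_congr rfl fun j _ => h3 j, ← Complex.ofReal_sum, col_norm x hU,
    Complex.ofReal_one]

lemma haarM_rowsum {μ : Measure (Fin d → Fin d → ℂ)} (hμ : IsHaarUnitary μ)
    (x i : Fin d) : ∑ k, haarM μ x i i k k = haarN μ x i i := by
  have h1 : ∑ k, haarM μ x i i k k = ∫ U, ∑ k, haarMono x i i k k U ∂μ :=
    (integral_finset_sum _ fun k _ => integrable_haarMono hμ x i i k k).symm
  have h2 : ∀ᵐ U ∂μ, ∑ k, haarMono x i i k k U = U i x * conj (U i x) := by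
    filter_upwards [hμ.2.1] with U hU
    calc ∑ k, haarMono x i i k k U
        = U i x * conj (U i x) * ∑ k, (U k x * conj (U k x)) := by
          rw [Finset.mul_sum]
          exact Finset.sum_congr rfl fun k _ => by unfold haarMono; ring
      _ = U i x * conj (U i x) := by rw [col_sum_one x hU, mul_one]
  rw [h1, integral_congr_ae h2]
  rfl

lemma haarM_diag_eq {μ : Measure (Fin d → Fin d → ℂ)} (hμ : IsHaarUnitary μ)
    (x : Fin d) {p q : Fin d} (hpq : p ≠ q) :
    haarM μ x p p p p = haarM μ x q q q q := by
  have h1 := haarM_had hμ x hpq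
  have h2 := haarM_had hμ x hpq.symm
  rw [haarM_swappair μ x q q p p] at h2
  linear_combination (h1 - h2) / 4

lemma haarM_offdiag_half {μ : Measure (Fin d → Fin d → ℂ)} (hμ : IsHaarUnitary μ)
    (x : Fin d) {p q : Fin d} (hpq : p ≠ q) :
    2 * haarM μ x p p q q = haarM μ x p p p p := by
  have h1 := haarM_had hμ x hpq
  have h2 := haarM_diag_eq hμ x hpq
  linear_combination (h2 - h1) / 2

lemma haarM_diag_val {μ : Measure (Fin d → Fin d → ℂ)} (hμ : IsHaarUnitary μ)
    (hd : 0 < d) (x i : Fin d) :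
    haarM μ x i i i i = 2 / ((d : ℂ) * ((d : ℂ) + 1)) := by
  have hrow := haarM_rowsum hμ x i
  rw [haarN_val hμ hd x i] at hrow
  rw [← Finset.add_sum_erase _ _ (Finset.mem_univ i)] at hrow
  have hB : ∀ k ∈ Finset.univ.erase i,
      haarM μ x i i k k = haarM μ x i i i i / 2 := by
    intro k hk
    have hik : i ≠ k := fun h => (Finset.mem_erase.mp hk).1 h.symm
    linear_combination (haarM_offdiag_half hμ x hik) / 2
  rw [Finset.sum_congr rfl hB, Finset.sum_const, Finset.card_erase_of_mem (Finset.mem_univ i),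
    Finset.card_univ, Fintype.card_fin, nsmul_eq_mul] at hrow
  have hcast : ((d - 1 : ℕ) : ℂ) = (d : ℂ) - 1 := by
    push_cast [Nat.cast_sub hd]
    ring
  rw [hcast] at hrow
  have hdc : (d : ℂ) ≠ 0 := Nat.cast_ne_zero.mpr hd.ne'
  have hd1 : (d : ℂ) + 1 ≠ 0 := by
    have : ((d + 1 : ℕ) : ℂ) ≠ 0 := Nat.cast_ne_zero.mpr (Nat.succ_ne_zero d)
    push_cast at this
    exact this
  rw [eq_div_iff (mul_ne_zero hdc hd1)]
  have hrow2 : ((d:ℂ)) * (haarM μ x i i i i + ((d:ℂ) - 1) * (haarM μ x i i i i / 2)) = 1 := by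
    rw [hrow]
    field_simp
  linear_combination 2 * hrow2

lemma haarM_offdiag_val {μ : Measure (Fin d → Fin d → ℂ)} (hμ : IsHaarUnitary μ)
    (hd : 0 < d) (x : Fin d) {i k : Fin d} (hik : i ≠ k) :
    haarM μ x i i k k = 1 / ((d : ℂ) * ((d : ℂ) + 1)) := by
  linear_combination (haarM_offdiag_half hμ x hik) / 2 + (haarM_diag_val hμ hd x i) / 2

lemma haarM_val {μ : Measure (Fin d → Fin d → ℂ)} (hμ : IsHaarUnitary μ)
    (hd : 0 < d) (x i j k l : Fin d) :
    haarM μ x i j k l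
      = ((if i = j then (1:ℂ) else 0) * (if k = l then (1:ℂ) else 0)
          + (if i = l then (1:ℂ) else 0) * (if k = j then (1:ℂ) else 0))
        / ((d : ℂ) * ((d : ℂ) + 1)) := by
  by_cases h1 : i = j ∧ k = l
  · obtain ⟨rfl, rfl⟩ := h1
    by_cases hik : i = k
    · subst hik
      rw [haarM_diag_val hμ hd x i]
      norm_num
    · have hki : ¬ k = i := fun h => hik h.symm
      rw [haarM_offdiag_val hμ hd x hik]
      simp [hik, hki]
  · by_cases h2 : i = l ∧ k = j
    · obtain ⟨rfl, rfl⟩ := h2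
      have hik : i ≠ k := fun h => h1 ⟨h, h.symm⟩
      have hki : ¬ k = i := fun h => hik h.symm
      rw [haarM_swapjl μ x i k k i, haarM_offdiag_val hμ hd x hik]
      simp [hik, hki]
    · rw [haarM_zero hμ x h1 h2]
      have e1 : (if i = j then (1:ℂ) else 0) * (if k = l then (1:ℂ) else 0) = 0 := by
        rcases not_and_or.mp h1 with h | h <;> simp [h]
      have e2 : (if i = l then (1:ℂ) else 0) * (if k = j then (1:ℂ) else 0) = 0 := by
        rcases not_and_or.mp h2 with h | h <;> simp [h]
      rw [e1, e2]
      norm_num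

lemma proj_entry (U : Fin d → Fin d → ℂ) (x a b : Fin d) :
    (Matrix.of U * Matrix.single x x (1:ℂ) * (Matrix.of U)ᴴ
      : Matrix (Fin d) (Fin d) ℂ) a b = U a x * conj (U b x) := by
  rw [Matrix.mul_apply]
  have h1 : ∀ c, (Matrix.of U * Matrix.single x x (1:ℂ)
      : Matrix (Fin d) (Fin d) ℂ) a c = if c = x then U a x else 0 := by
    intro c
    by_cases hc : c = x
    · subst hc
      simp
    · simp [hc]
  have h2 : ∀ c, (Matrix.of U * Matrix.single x x (1:ℂ)
        : Matrix (Fin d) (Fin d) ℂ) a c * (Matrix.of U)ᴴ c b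
      = if c = x then U a x * conj (U b x) else 0 := by
    intro c
    rw [h1 c]
    by_cases hc : c = x
    · subst hc
      rw [if_pos rfl, if_pos rfl, Matrix.conjTranspose_apply, Matrix.of_apply,
        Complex.star_def]
    · rw [if_neg hc, if_neg hc, zero_mul]
  rw [Finset.sum_congr rfl fun c _ => h2 c, Finset.sum_ite_eq' _ x
    (fun _ => U a x * conj (U b x)), if_pos (Finset.mem_univ x)]

lemma trace_formula (U : Fin d → Fin d → ℂ) (ρ : Matrix (Fin d) (Fin d) ℂ) (x : Fin d) :
    (Matrix.of U * Matrix.single x x 1 * (Matrix.of U)ᴴ * ρ).trace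
      = ∑ a, ∑ b, ρ b a * (U a x * conj (U b x)) := by
  rw [Matrix.trace]
  refine Finset.sum_congr rfl fun a _ => ?_
  rw [Matrix.diag_apply, Matrix.mul_apply]
  refine Finset.sum_congr rfl fun b _ => ?_
  rw [proj_entry U x a b]
  ring

end HaarBornAux

open HaarBornAux in
theorem haar_average_born_product' {d : ℕ} (hd : 0 < d)
    (μU : Measure (Fin d → Fin d → ℂ)) (hμU : IsHaarUnitary μU) (x : Fin d)
    (ρ σ : Matrix (Fin d) (Fin d) ℂ)
    (hρtr : ρ.trace = 1) (hσtr : σ.trace = 1) :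
    ∫ U, (Matrix.of U * Matrix.single x x 1 * (Matrix.of U)ᴴ * ρ).trace *
        (Matrix.of U * Matrix.single x x 1 * (Matrix.of U)ᴴ * σ).trace ∂μU
      = (1 + (ρ * σ).trace) / (d * (d + 1)) := by
  have hptw : ∀ U : Fin d → Fin d → ℂ,
      (Matrix.of U * Matrix.single x x 1 * (Matrix.of U)ᴴ * ρ).trace *
        (Matrix.of U * Matrix.single x x 1 * (Matrix.of U)ᴴ * σ).trace
      = ∑ a, ∑ k, ∑ b, ∑ l, (ρ b a * σ l k) * haarMono x a b k l U := by
    intro U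
    rw [trace_formula U ρ x, trace_formula U σ x, Finset.sum_mul_sum]
    refine Finset.sum_congr rfl fun a _ => Finset.sum_congr rfl fun k _ => ?_
    rw [Finset.sum_mul_sum]
    refine Finset.sum_congr rfl fun b _ => Finset.sum_congr rfl fun l _ => ?_
    unfold haarMono
    ring
  rw [integral_congr_ae (Filter.Eventually.of_forall hptw)]
  have hpush : ∫ U, ∑ a, ∑ k, ∑ b, ∑ l, (ρ b a * σ l k) * haarMono x a b k l U ∂μU
      = ∑ a, ∑ k, ∑ b, ∑ l, (ρ b a * σ l k) * haarM μU x a b k l := by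
    rw [integral_finset_sum _ (fun a _ => integrable_finset_sum _ (fun k _ =>
      integrable_finset_sum _ (fun b _ => integrable_finset_sum _ (fun l _ =>
        (integrable_haarMono hμU x a b k l).const_mul _))))]
    refine Finset.sum_congr rfl fun a _ => ?_
    rw [integral_finset_sum _ (fun k _ => integrable_finset_sum _ (fun b _ =>
      integrable_finset_sum _ (fun l _ => (integrable_haarMono hμU x a b k l).const_mul _)))]
    refine Finset.sum_congr rfl fun k _ => ?_
    rw [integral_finset_sum _ (fun b _ => integrable_finset_sum _ (fun l _ =>
      (integrable_haarMono hμU x a b k l).const_mul _))]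
    refine Finset.sum_congr rfl fun b _ => ?_
    rw [integral_finset_sum _ (fun l _ => (integrable_haarMono hμU x a b k l).const_mul _)]
    refine Finset.sum_congr rfl fun l _ => ?_
    exact integral_const_mul _ _
  rw [hpush]
  have hval : ∀ a k b l : Fin d, (ρ b a * σ l k) * haarM μU x a b k l
      = (ρ b a * σ l k) * (((if a = b then (1:ℂ) else 0) * (if k = l then (1:ℂ) else 0)
          + (if a = l then (1:ℂ) else 0) * (if k = b then (1:ℂ) else 0))
        / ((d : ℂ) * ((d : ℂ) + 1))) := by
    intro a k b l
    rw [haarM_val hμU hd x a b k l]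
  simp only [hval]
  have key : ∑ a, ∑ k, ∑ b, ∑ l : Fin d, (ρ b a * σ l k) *
      (((if a = b then (1:ℂ) else 0) * (if k = l then (1:ℂ) else 0)
          + (if a = l then (1:ℂ) else 0) * (if k = b then (1:ℂ) else 0))
        / ((d : ℂ) * ((d : ℂ) + 1)))
      = (ρ.trace * σ.trace + (ρ * σ).trace) / ((d : ℂ) * ((d : ℂ) + 1)) := by
    have t : ∀ a k b l : Fin d, (ρ b a * σ l k) *
        (((if a = b then (1:ℂ) else 0) * (if k = l then (1:ℂ) else 0)
          + (if a = l then (1:ℂ) else 0) * (if k = b then (1:ℂ) else 0))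
          / ((d : ℂ) * ((d : ℂ) + 1)))
        = ((if a = b then ρ b a else 0) * (if k = l then σ l k else 0)
            + (if a = l then (if k = b then ρ b a * σ l k else 0) else 0))
          * ((d : ℂ) * ((d : ℂ) + 1))⁻¹ := by
      intro a k b l
      split_ifs <;> ring
    simp only [t]
    simp only [← Finset.sum_mul]
    have hnum : ∑ a, ∑ k, ∑ b, ∑ l : Fin d,
        ((if a = b then ρ b a else 0) * (if k = l then σ l k else 0)
          + (if a = l then (if k = b then ρ b a * σ l k else 0) else 0))
        = ρ.trace * σ.trace + (ρ * σ).trace := by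
      simp only [Finset.sum_add_distrib]
      congr 1
      · have e : ∀ a k : Fin d, ∑ b, ∑ l : Fin d,
            (if a = b then ρ b a else 0) * (if k = l then σ l k else 0)
            = ρ a a * σ k k := by
          intro a k
          rw [← Finset.sum_mul_sum]
          rw [Finset.sum_ite_eq, Finset.sum_ite_eq]
          simp
        simp only [e]
        rw [Matrix.trace, Matrix.trace, Finset.sum_mul_sum]
        rfl
      · have e : ∀ a k : Fin d, ∑ b, ∑ l : Fin d,
            (if a = l then (if k = b then ρ b a * σ l k else 0) else 0)
            = ρ k a * σ a k := by
          intro a k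
          simp [Finset.sum_ite_eq]
        simp only [e]
        rw [Matrix.trace, Finset.sum_comm]
        refine Finset.sum_congr rfl fun k _ => ?_
        rw [Matrix.diag_apply, Matrix.mul_apply]
    rw [hnum, div_eq_mul_inv]
  rw [key, hρtr, hσtr]
  norm_num

/-- For density matrices `ρ, σ` and a fixed outcome `x`, the Haar average of the
product of the two Born-rule outcome probabilities is
`∫ Tr(U|x⟩⟨x|Uᴴ ρ) · Tr(U|x⟩⟨x|Uᴴ σ) dU = (1 + Tr(ρσ)) / (d (d + 1))`. -/
theorem haar_average_born_product {d : ℕ} (hd : 0 < d)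
    (μU : Measure (Fin d → Fin d → ℂ)) (hμU : IsHaarUnitary μU) (x : Fin d)
    (ρ σ : Matrix (Fin d) (Fin d) ℂ) (hρ : ρ.PosSemidef) (hσ : σ.PosSemidef)
    (hρtr : ρ.trace = 1) (hσtr : σ.trace = 1) :
    ∫ U, (Matrix.of U * Matrix.single x x 1 * (Matrix.of U)ᴴ * ρ).trace *
        (Matrix.of U * Matrix.single x x 1 * (Matrix.of U)ᴴ * σ).trace ∂μU
      = (1 + (ρ * σ).trace) / (d * (d + 1)) :=
  haar_average_born_product' hd μU hμU x ρ σ hρtr hσtr
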